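/- Let C ⊆ ℝⁿ be a convex set and f : C → ℝ. Then f is strictly level convex if and only if for every c in the range of f the following two conditions hold: (i) the sublevel set L_c(f) := {x ∈ C : f(x) ≤ c} is convex, and (ii) the level set R_c(f) := {x ∈ C : f(x) = c} is contained in the set of extreme points of L_c(f). -/

import Mathlib

open Set

/-- A function `f` defined on a convex set `C ⊆ ℝⁿ` is *level convex on `C`* if
`f (t ξ + (1-t) η) ≤ max (f ξ) (f η)` for all `ξ, η ∈ C` and `t ∈ [0,1]`. -/
def LevelConvexOn {n : ℕ} (C : Set (EuclideanSpace ℝ (Fin n)))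
    (f : EuclideanSpace ℝ (Fin n) → ℝ) : Prop :=
  ∀ ξ ∈ C, ∀ η ∈ C, ∀ t ∈ Set.Icc (0 : ℝ) 1,
    f (t • ξ + (1 - t) • η) ≤ max (f ξ) (f η)

/-- A level convex function `f` on a convex set `C ⊆ ℝⁿ` is *strictly level convex on `C`*
if `f (t ξ + (1-t) η) < max (f ξ) (f η)` for every `t ∈ (0,1)` and all `ξ ≠ η` in `C`. -/
def StrictLevelConvexOn {n : ℕ} (C : Set (EuclideanSpace ℝ (Fin n)))
    (f : EuclideanSpace ℝ (Fin n) → ℝ) : Prop :=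
  LevelConvexOn C f ∧
    ∀ ξ ∈ C, ∀ η ∈ C, ξ ≠ η → ∀ t ∈ Set.Ioo (0 : ℝ) 1,
      f (t • ξ + (1 - t) • η) < max (f ξ) (f η)

/-- `f` is strictly level convex on a convex set `C` if and only if, for every `c` in the
range of `f` on `C`, the sublevel set `L_c(f) = {x ∈ C : f x ≤ c}` is convex and the
level set `R_c(f) = {x ∈ C : f x = c}` consists of extreme points of `L_c(f)`. -/
theorem strictLevelConvexOn_iff_extremePoints {n : ℕ}
    (C : Set (EuclideanSpace ℝ (Fin n))) (hC : Convex ℝ C)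
    (f : EuclideanSpace ℝ (Fin n) → ℝ) :
    StrictLevelConvexOn C f ↔
      ∀ c ∈ f '' C,
        Convex ℝ {x ∈ C | f x ≤ c} ∧
        {x ∈ C | f x = c} ⊆ Set.extremePoints ℝ {x ∈ C | f x ≤ c} := by
  constructor
  · rintro ⟨hlc, hstrict⟩ c ⟨x₀, hx₀, rfl⟩
    constructor
    · intro y hy z hz a b ha hb hab
      refine ⟨hC hy.1 hz.1 ha hb hab, ?_⟩
      have hb' : b = 1 - a := by linarith
      subst hb'
      calc f (a • y + (1 - a) • z) ≤ max (f y) (f z) :=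
            hlc y hy.1 z hz.1 a ⟨ha, by linarith⟩
        _ ≤ f x₀ := max_le hy.2 hz.2
    · rintro x ⟨hxC, hx⟩
      refine ⟨⟨hxC, hx.le⟩, ?_⟩
      rintro y ⟨hyC, hy⟩ z ⟨hzC, hz⟩ ⟨a, b, ha, hb, hab, hxyz⟩
      by_cases hyz : y = z
      · subst hyz
        have : x = y := by
          rw [← hxyz, ← add_smul, hab, one_smul]
        exact this.symm
      · exfalso
        have hb' : b = 1 - a := by linarith
        have := hstrict y hyC z hzC hyz a ⟨ha, by linarith⟩
        rw [← hb', hxyz, hx] at this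
        exact absurd (max_le hy hz) (not_le.mpr this)
  · intro h
    have hlc : LevelConvexOn C f := by
      intro ξ hξ η hη t ht
      set c := max (f ξ) (f η) with hc
      have hcmem : c ∈ f '' C := by
        rcases max_cases (f ξ) (f η) with ⟨h1, _⟩ | ⟨h1, _⟩
        · exact ⟨ξ, hξ, h1.symm⟩
        · exact ⟨η, hη, h1.symm⟩
      have hconv := (h c hcmem).1
      have : t • ξ + (1 - t) • η ∈ {x ∈ C | f x ≤ c} :=
        hconv ⟨hξ, le_max_left _ _⟩ ⟨hη, le_max_right _ _⟩ ht.1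
          (by linarith [ht.2]) (by ring)
      exact this.2
    refine ⟨hlc, ?_⟩
    intro ξ hξ η hη hne t ht
    set c := max (f ξ) (f η) with hc
    have hcmem : c ∈ f '' C := by
      rcases max_cases (f ξ) (f η) with ⟨h1, _⟩ | ⟨h1, _⟩
      · exact ⟨ξ, hξ, h1.symm⟩
      · exact ⟨η, hη, h1.symm⟩
    have hle : f (t • ξ + (1 - t) • η) ≤ c :=
      hlc ξ hξ η hη t ⟨ht.1.le, ht.2.le⟩
    rcases lt_or_eq_of_le hle with hlt | heq
    · exact hlt
    · exfalso
      have hmC : t • ξ + (1 - t) • η ∈ C :=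
        hC hξ hη ht.1.le (by linarith [ht.2]) (by ring)
      have hext := (h c hcmem).2 ⟨hmC, heq⟩
      have hseg : t • ξ + (1 - t) • η ∈ openSegment ℝ ξ η :=
        ⟨t, 1 - t, ht.1, by linarith [ht.2], by ring, rfl⟩
      have := hext.2 ⟨hξ, le_max_left _ _⟩ ⟨hη, le_max_right _ _⟩ hseg
      have hseg' : t • ξ + (1 - t) • η ∈ openSegment ℝ η ξ := by
        rw [openSegment_symm]; exact hseg
      have this2 := hext.2 ⟨hη, le_max_right _ _⟩ ⟨hξ, le_max_left _ _⟩ hseg'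
      exact hne (this.trans this2.symm)
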